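/- Let F : {0,…,2^n − 1} → {0,…,2^n − 1} be any composition (in any order) of maps of the form x ↦ x ⊕ α_i (i = 1,…,m) and x ↦ (x + β_j) mod 2^n. If F(x) = x ⊕ γ for all x, then γ ∈ {α_1 ⊕ ⋯ ⊕ α_m, (α_1 ⊕ ⋯ ⊕ α_m) ⊕ 2^{n−1}}. -/

import Mathlib

/-- One encryption step: `(true, c)` is the XOR-mask `x ↦ x ⊕ c`, and
`(false, c)` is the modular addition `x ↦ (x + c) mod 2^n`. -/
def applySteps (n : ℕ) (L : List (Bool × ℕ)) (x : ℕ) : ℕ :=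
  L.foldl (fun y p => if p.1 then y ^^^ p.2 else (y + p.2) % 2 ^ n) x

-- bit k of an xor
private lemma xordiv (a b k : ℕ) : ((a ^^^ b) / 2^k) % 2 = ((a / 2^k) % 2 + (b / 2^k) % 2) % 2 := by
  have h := Nat.testBit_xor a b k
  simp only [Nat.testBit_eq_decide_div_mod_eq] at h
  rcases Nat.mod_two_eq_zero_or_one ((a ^^^ b) / 2^k) with h1 | h1 <;>
  rcases Nat.mod_two_eq_zero_or_one (a / 2^k) with h2 | h2 <;>
  rcases Nat.mod_two_eq_zero_or_one (b / 2^k) with h3 | h3 <;>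
  simp [h1, h2, h3] at h ⊢

private lemma xormod (a b k : ℕ) : (a ^^^ b) % 2^k = (a % 2^k) ^^^ (b % 2^k) := by
  apply Nat.eq_of_testBit_eq
  intro i
  by_cases h : i < k <;> simp [Nat.testBit_mod_two_pow, Nat.testBit_xor, h]

private lemma xorlt {a b n : ℕ} (ha : a < 2^n) (hb : b < 2^n) : a ^^^ b < 2^n := by
  have := Nat.bitwise_lt_two_pow (f := bne) ha hb
  simpa [HXor.hXor, XorOp.xor, Nat.xor] using this

-- full adder identity for the quotient
private lemma adddiv (a b k : ℕ) : (a + b) / 2^k = a / 2^k + b / 2^k + (a % 2^k + b % 2^k) / 2^k := by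
  have hp : 0 < 2^k := Nat.pow_pos (n := k) (by norm_num)
  have ha := Nat.div_add_mod a (2^k)
  have hb := Nat.div_add_mod b (2^k)
  have key : a + b = (a % 2^k + b % 2^k) + 2^k * (a / 2^k + b / 2^k) := by
    ring_nf
    ring_nf at ha hb
    linarith
  rw [key, Nat.add_mul_div_left _ _ hp]
  ring

private lemma halfdiv (T r m : ℕ) (hT : 0 < T) (hr : r < T) (hm : m ≤ 3) :
    (r + T * m) / (T * 2) = m / 2 := by
  interval_cases m
  · rw [Nat.div_eq_of_lt (by omega)]
  · rw [Nat.div_eq_of_lt (by omega)]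
  · rw [show r + T * 2 = r + (T * 2) * 1 by ring, Nat.add_mul_div_left _ _ (by omega),
      Nat.div_eq_of_lt (by omega)]
  · rw [show r + T * 3 = (r + T) + (T * 2) * 1 by ring, Nat.add_mul_div_left _ _ (by omega),
      Nat.div_eq_of_lt (by omega)]

private lemma carry2 (T ra rb e b : ℕ) (hT : 0 < T) (hra : ra < T) (hrb : rb < T)
    (he : e ≤ 1) (hb : b ≤ 1) :
    ((ra + T * e) + (rb + T * b)) / (T * 2) = (e + b + (ra + rb) / T) / 2 := by
  have hc : (ra + rb) / T ≤ 1 := by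
    have h1 : ra + rb < T * 2 := by omega
    have := Nat.div_lt_of_lt_mul h1
    omega
  have hdm := Nat.div_add_mod (ra + rb) T
  have hrm : (ra + rb) % T < T := Nat.mod_lt _ hT
  have key : (ra + T * e) + (rb + T * b) = (ra + rb) % T + T * (e + b + (ra + rb) / T) := by
    ring_nf
    ring_nf at hdm
    linarith
  rw [key, halfdiv T _ _ hT hrm (by omega)]

private lemma modtrans (n k x : ℕ) (hk : k < n) :
    ((x % 2^n) / 2^k) % 2 = (x / 2^k) % 2 ∧ (x % 2^n) % 2^k = x % 2^k := by
  constructor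
  · have hnk : k + (n - k) = n := by omega
    have h1 : x = x % 2^n + 2^k * (2^(n-k) * (x / 2^n)) := by
      rw [← mul_assoc, ← pow_add, hnk]
      exact (Nat.mod_add_div x (2^n)).symm
    have h2 : x / 2^k = (x % 2^n) / 2^k + 2^(n-k) * (x / 2^n) := by
      conv_lhs => rw [h1]
      rw [Nat.add_mul_div_left _ _ (Nat.pow_pos (n := k) (by norm_num))]
    have h3 : (2^(n-k) * (x / 2^n)) % 2 = 0 := by
      have hh : n - k = (n - k - 1) + 1 := by omega
      rw [hh, pow_succ, show 2^(n-k-1) * 2 * (x / 2^n) = 2 * (2^(n-k-1) * (x / 2^n)) by ring,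
        Nat.mul_mod_right]
    omega
  · exact Nat.mod_mod_of_dvd x (pow_dvd_pow 2 hk.le)

private lemma addstep (n l : ℕ) (hl : l + 2 ≤ n) (y y' c : ℕ)
    (b1 : y' % 2^l = y % 2^l) (b2 : y' / 2^l % 2 + y / 2^l % 2 = 1) :
    ((y'+c) % 2^n) % 2^l = ((y+c) % 2^n) % 2^l ∧
    ((y'+c) % 2^n) / 2^l % 2 + ((y+c) % 2^n) / 2^l % 2 = 1 ∧
    (((y'+c) % 2^n) / 2^(l+1) % 2 + ((y+c) % 2^n) / 2^(l+1) % 2 + ((y+c) % 2^n) / 2^l % 2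
      + y' / 2^(l+1) % 2 + y / 2^(l+1) % 2 + y / 2^l % 2) % 2 = 0 := by
  have hT : 0 < (2:ℕ)^l := Nat.pow_pos (n := l) (by norm_num)
  have t1 := modtrans n l (y'+c) (by omega)
  have t2 := modtrans n l (y+c) (by omega)
  have t3 := modtrans n (l+1) (y'+c) (by omega)
  have t4 := modtrans n (l+1) (y+c) (by omega)
  have hp : (2:ℕ)^(l+1) = 2^l * 2 := pow_succ 2 l
  have hmy : y % 2^l < 2^l := Nat.mod_lt _ hT
  have hmc : c % 2^l < 2^l := Nat.mod_lt _ hT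
  have hk0 : (y % 2^l + c % 2^l) / 2^l ≤ 1 := by
    have h1 : y % 2^l + c % 2^l < 2^l * 2 := by omega
    have := Nat.div_lt_of_lt_mul h1
    omega
  have he : y / 2^l % 2 ≤ 1 := Nat.le_of_lt_succ (Nat.mod_lt _ (by norm_num))
  have he' : y' / 2^l % 2 ≤ 1 := Nat.le_of_lt_succ (Nat.mod_lt _ (by norm_num))
  have hb : c / 2^l % 2 ≤ 1 := Nat.le_of_lt_succ (Nat.mod_lt _ (by norm_num))
  have hy2 : y % 2^(l+1) = y % 2^l + 2^l * (y / 2^l % 2) := by rw [hp]; exact Nat.mod_mul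
  have hy2' : y' % 2^(l+1) = y' % 2^l + 2^l * (y' / 2^l % 2) := by rw [hp]; exact Nat.mod_mul
  have hc2 : c % 2^(l+1) = c % 2^l + 2^l * (c / 2^l % 2) := by rw [hp]; exact Nat.mod_mul
  have hC : (y % 2^(l+1) + c % 2^(l+1)) / 2^(l+1)
      = (y / 2^l % 2 + c / 2^l % 2 + (y % 2^l + c % 2^l) / 2^l) / 2 := by
    rw [hy2, hc2, hp]; exact carry2 (2^l) _ _ _ _ hT hmy hmc he hb
  have hC' : (y' % 2^(l+1) + c % 2^(l+1)) / 2^(l+1)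
      = (y' / 2^l % 2 + c / 2^l % 2 + (y % 2^l + c % 2^l) / 2^l) / 2 := by
    rw [hy2', hc2, b1, hp]; exact carry2 (2^l) _ _ _ _ hT hmy hmc he' hb
  refine ⟨?_, ?_, ?_⟩
  · rw [t1.2, t2.2, Nat.add_mod y' c, b1, ← Nat.add_mod]
  · rw [t1.1, t2.1, adddiv y' c l, adddiv y c l, b1]
    set k0 := (y % 2^l + c % 2^l) / 2^l with hk0def
    set u' := y' / 2^l with hu'
    set u := y / 2^l with hu
    set v := c / 2^l with hv
    have b2' : u' % 2 + u % 2 = 1 := b2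
    clear_value k0 u' u v
    omega
  · rw [t3.1, t4.1, t2.1, adddiv y' c (l+1), adddiv y c (l+1), adddiv y c l, hC, hC']
    set k0 := (y % 2^l + c % 2^l) / 2^l with hk0def
    set u' := y' / 2^l with hu'
    set u := y / 2^l with hu
    set v := c / 2^l with hv
    set Y2' := y' / 2^(l+1) with hY2'
    set Y2 := y / 2^(l+1) with hY2
    set C2 := c / 2^(l+1) with hC2
    have b2' : u' % 2 + u % 2 = 1 := b2
    have hk0' : k0 ≤ 1 := hk0
    clear_value k0 u' u v Y2' Y2 C2
    have hCD : (u' % 2 + v % 2 + k0) / 2 + (u % 2 + v % 2 + k0) / 2 = v % 2 + k0 := by omega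
    omega

private lemma mainlem (n l : ℕ) (hl : l + 2 ≤ n) :
    ∀ (L : List (Bool × ℕ)), (∀ p ∈ L, p.2 < 2^n) → ∀ y y' : ℕ, y < 2^n → y' < 2^n →
      y' % 2^l = y % 2^l → y' / 2^l % 2 + y / 2^l % 2 = 1 →
      (applySteps n L y') % 2^l = (applySteps n L y) % 2^l ∧
      (applySteps n L y') / 2^l % 2 + (applySteps n L y) / 2^l % 2 = 1 ∧
      ((applySteps n L y') / 2^(l+1) % 2 + (applySteps n L y) / 2^(l+1) % 2
        + (applySteps n L y) / 2^l % 2 + y' / 2^(l+1) % 2 + y / 2^(l+1) % 2 + y / 2^l % 2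
        + ((L.filter (·.1)).foldr (fun p acc => p.2 ^^^ acc) 0) / 2^l % 2) % 2 = 0 := by
  intro L
  induction L with
  | nil =>
    intro _ y y' hy hy' b1 b2
    refine ⟨b1, b2, ?_⟩
    simp only [applySteps, List.foldl_nil, List.filter_nil, List.foldr_nil, Nat.zero_div,
      Nat.zero_mod, Nat.add_zero]
    omega
  | cons p L ih =>
    obtain ⟨pb, pc⟩ := p
    intro hL y y' hy hy' b1 b2
    have hpc : pc < 2^n := hL (pb, pc) (List.mem_cons_self)
    have hL' : ∀ q ∈ L, q.2 < 2^n := fun q hq => hL q (List.mem_cons_of_mem _ hq)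
    cases pb with
    | true =>
      have hstep : ∀ z, applySteps n ((true, pc) :: L) z = applySteps n L (z ^^^ pc) :=
        fun z => rfl
      have hfilter : ((true, pc) :: L).filter (·.1) = (true, pc) :: L.filter (·.1) :=
        List.filter_cons_of_pos (by simp)
      have b1' : (y' ^^^ pc) % 2^l = (y ^^^ pc) % 2^l := by rw [xormod, xormod, b1]
      have b2' : (y' ^^^ pc) / 2^l % 2 + (y ^^^ pc) / 2^l % 2 = 1 := by
        rw [xordiv, xordiv]; omega
      obtain ⟨ih1, ih2, ih3⟩ := ih hL' (y ^^^ pc) (y' ^^^ pc) (xorlt hy hpc) (xorlt hy' hpc)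
        b1' b2'
      rw [hstep y, hstep y', hfilter]
      refine ⟨ih1, ih2, ?_⟩
      simp only [List.foldr_cons]
      rw [xordiv y' pc (l+1), xordiv y pc (l+1), xordiv y pc l] at ih3
      rw [xordiv pc _ l]
      omega
    | false =>
      have hstep : ∀ z, applySteps n ((false, pc) :: L) z = applySteps n L ((z + pc) % 2^n) :=
        fun z => rfl
      have hfilter : ((false, pc) :: L).filter (·.1) = L.filter (·.1) :=
        List.filter_cons_of_neg (by simp)
      obtain ⟨s1, s2, s3⟩ := addstep n l hl y y' pc b1 b2
      obtain ⟨ih1, ih2, ih3⟩ := ih hL' ((y + pc) % 2^n) ((y' + pc) % 2^n)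
        (Nat.mod_lt _ (Nat.pow_pos (n := n) (by norm_num)))
        (Nat.mod_lt _ (Nat.pow_pos (n := n) (by norm_num))) s1 s2
      rw [hstep y, hstep y', hfilter]
      refine ⟨ih1, ih2, ?_⟩
      omega

private lemma foldlt (n : ℕ) : ∀ (L : List (Bool × ℕ)), (∀ p ∈ L, p.2 < 2^n) →
    (L.filter (·.1)).foldr (fun p acc => p.2 ^^^ acc) 0 < 2^n := by
  intro L
  induction L with
  | nil => intro _; simpa using Nat.pow_pos (n := n) (by norm_num)
  | cons p L ih =>
    obtain ⟨pb, pc⟩ := p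
    intro hL
    have hpc : pc < 2^n := hL (pb, pc) (List.mem_cons_self)
    have hL' : ∀ q ∈ L, q.2 < 2^n := fun q hq => hL q (List.mem_cons_of_mem _ hq)
    cases pb with
    | true =>
      rw [List.filter_cons_of_pos (by simp), List.foldr_cons]
      exact xorlt hpc (ih hL')
    | false =>
      rw [List.filter_cons_of_neg (by simp)]
      exact ih hL'

theorem stmt_11 (n : ℕ) (hn : 1 ≤ n) (L : List (Bool × ℕ))
    (hL : ∀ p ∈ L, p.2 < 2 ^ n)
    (γ : ℕ) (hγ : γ < 2 ^ n)
    (hF : ∀ x < 2 ^ n, applySteps n L x = x ^^^ γ) :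
    γ = (L.filter (·.1)).foldr (fun p acc => p.2 ^^^ acc) 0 ∨
    γ = ((L.filter (·.1)).foldr (fun p acc => p.2 ^^^ acc) 0) ^^^ 2 ^ (n - 1) := by
  set A := (L.filter (·.1)).foldr (fun p acc => p.2 ^^^ acc) 0 with hAdef
  have hA : A < 2^n := foldlt n L hL
  have hbit : ∀ i, i + 2 ≤ n → γ / 2^i % 2 = A / 2^i % 2 := by
    intro i hi
    have h2i : (2:ℕ)^i < 2^n := Nat.pow_lt_pow_right (by norm_num) (by omega)
    have h2i1 : (2:ℕ)^i < 2^(i+1) := Nat.pow_lt_pow_right (by norm_num) (by omega)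
    have hTpos : 0 < (2:ℕ)^i := Nat.pow_pos (n := i) (by norm_num)
    obtain ⟨m1, m2, m3⟩ := mainlem n i hi L hL 0 (2^i)
      (Nat.pow_pos (n := n) (by norm_num)) h2i (by simp [Nat.mod_self])
      (by rw [Nat.div_self hTpos]; simp)
    rw [hF 0 (Nat.pow_pos (n := n) (by norm_num)), hF (2^i) h2i, Nat.zero_xor] at m3
    rw [xordiv (2^i) γ (i+1), Nat.div_eq_of_lt h2i1] at m3
    simp only [Nat.zero_div, Nat.zero_mod] at m3
    rw [hAdef]
    omega
  have hd : γ ^^^ A < 2^n := xorlt hγ hA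
  have hbits : ∀ i, i ≠ n - 1 → (γ ^^^ A).testBit i = false := by
    intro i hi
    rcases lt_or_ge i n with h | h
    · have hi2 : i + 2 ≤ n := by omega
      have hb := hbit i hi2
      rw [Nat.testBit_xor]
      have hbb : γ.testBit i = A.testBit i := by
        simp [Nat.testBit_eq_decide_div_mod_eq, hb]
      rw [hbb, Bool.xor_self]
    · exact Nat.testBit_lt_two_pow
        (lt_of_lt_of_le hd (Nat.pow_le_pow_right (by norm_num) h))
  have hxa : γ = (γ ^^^ A) ^^^ A := by
    rw [Nat.xor_assoc, Nat.xor_self, Nat.xor_zero]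
  cases hmsb : (γ ^^^ A).testBit (n-1) with
  | false =>
    left
    have hz : γ ^^^ A = 0 := by
      apply Nat.zero_of_testBit_eq_false
      intro i
      by_cases hii : i = n - 1
      · rw [hii]; exact hmsb
      · exact hbits i hii
    exact xor_eq_zero_iff.mp hz
  | true =>
    right
    have hz : γ ^^^ A = 2^(n-1) := by
      apply Nat.eq_of_testBit_eq
      intro i
      by_cases hii : i = n - 1
      · rw [hii, hmsb, Nat.testBit_two_pow_self]
      · rw [hbits i hii, Nat.testBit_two_pow_of_ne (fun hh => hii hh.symm)]
    rw [hxa, hz, Nat.xor_comm]
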